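/- Suppose F ≤ Sym(Ω) is 2-transitive and P is a bi-infinite path in the regular tree T (with deg(T) = |Ω|). Then there exists h ∈ U(F) hyperbolic with translation length l(h) = 1 and axis(h) = P. -/

import Mathlib

namespace Stmt8Aux


open SimpleGraph Walk

variable {V : Type*} {T : SimpleGraph V}

noncomputable def pth (hc : T.Connected) (v w : V) : T.Walk v w :=
  letI : DecidableEq V := Classical.decEq V
  (hc v w).some.bypass

lemma pth_isPath (hc : T.Connected) (v w : V) : (pth hc v w).IsPath := by
  letI : DecidableEq V := Classical.decEq V
  exact Walk.bypass_isPath _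

lemma eq_pth (ha : T.IsAcyclic) (hc : T.Connected) {v w : V} (q : T.Walk v w)
    (hq : q.IsPath) : q = pth hc v w :=
  congrArg Subtype.val (ha.path_unique ⟨q, hq⟩ ⟨pth hc v w, pth_isPath hc v w⟩)

lemma pth_self (ha : T.IsAcyclic) (hc : T.Connected) (v : V) : pth hc v v = Walk.nil :=
  (eq_pth ha hc Walk.nil (Walk.IsPath.nil)).symm

lemma length_eq_zero_of_isPath (ha : T.IsAcyclic) {v : V} (q : T.Walk v v)
    (hq : q.IsPath) : q.length = 0 := by
  rw [(SimpleGraph.Walk.isPath_iff_eq_nil (p := q)).mp hq]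
  rfl

lemma isPath_of_noBT (ha : T.IsAcyclic) {v w : V} (q : T.Walk v w)
    (hnb : ∀ i, i + 2 ≤ q.length → q.getVert i ≠ q.getVert (i + 2)) : q.IsPath := by
  induction q with
  | nil => exact Walk.IsPath.nil
  | @cons v x w h q ih =>
    have hq : q.IsPath := by
      apply ih
      intro i hi
      have := hnb (i + 1) (by simpa [Walk.length_cons] using Nat.add_le_add_right hi 1)
      simpa [Walk.getVert_cons_succ] using this
    rw [Walk.cons_isPath_iff]
    refine ⟨hq, fun hv => ?_⟩
    classical
    have ht : (q.takeUntil v hv).IsPath := hq.takeUntil hv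
    have h1 : (Walk.cons h.symm Walk.nil : T.Walk x v).IsPath := by
      simp [Walk.cons_isPath_iff, h.symm.ne]
    have heq : q.takeUntil v hv = Walk.cons h.symm Walk.nil :=
      congrArg Subtype.val (ha.path_unique ⟨_, ht⟩ ⟨_, h1⟩)
    have hspec := q.take_spec hv
    rw [heq] at hspec
    -- q = cons h.symm (dropUntil), so q.getVert 1 = v
    have hg1 : q.getVert 1 = v := by
      rw [← hspec]
      simp [Walk.getVert_append]
    have hlen : 1 ≤ q.length := by
      rw [← hspec]
      simp [Walk.length_append]
    have := hnb 0 (by rw [Walk.length_cons]; exact Nat.add_le_add_right hlen 1)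
    apply this
    simp [Walk.getVert_cons_succ, hg1, Walk.getVert_zero]

lemma getVert_map {W : Type*} {T' : SimpleGraph W} (f : T →g T') {v w : V} (q : T.Walk v w)
    (i : ℕ) : (q.map f).getVert i = f (q.getVert i) := by
  induction q generalizing i with
  | nil => simp [Walk.getVert]
  | cons h q ih =>
    cases i with
    | zero => simp
    | succ n => simp [Walk.map_cons, Walk.getVert_cons_succ, ih]

lemma getVert_injOn_of_isPath {v w : V} {q : T.Walk v w} (hq : q.IsPath) :
    ∀ i ≤ q.length, ∀ j ≤ q.length, q.getVert i = q.getVert j → i = j := by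
  induction q with
  | nil => intro i hi j hj _; simp [Walk.length_nil] at hi hj; omega
  | @cons v x w h q ih =>
    have hq : q.IsPath := hq.of_cons
    have hv : v ∉ q.support := (Walk.cons_isPath_iff h q).mp ‹(Walk.cons h q).IsPath› |>.2
    intro i hi j hj hEq
    match i, j with
    | 0, 0 => rfl
    | 0, (j+1) =>
      exfalso
      apply hv
      rw [Walk.mem_support_iff_exists_getVert]
      refine ⟨j, ?_, ?_⟩
      · rw [Walk.getVert_zero, Walk.getVert_cons_succ] at hEq
        exact hEq.symm
      · simp [Walk.length_cons] at hj; omega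
    | (i+1), 0 =>
      exfalso
      apply hv
      rw [Walk.mem_support_iff_exists_getVert]
      refine ⟨i, ?_, ?_⟩
      · rw [Walk.getVert_zero, Walk.getVert_cons_succ] at hEq
        exact hEq
      · simp [Walk.length_cons] at hi; omega
    | (i+1), (j+1) =>
      rw [Walk.getVert_cons_succ, Walk.getVert_cons_succ] at hEq
      have := ih hq i (by simp [Walk.length_cons] at hi; omega) j (by simp [Walk.length_cons] at hj; omega) hEq
      omega

lemma map_isPath_of_locInj (ha : T.IsAcyclic) (f : T →g T)
    (hloc : ∀ u v1 v2, T.Adj u v1 → T.Adj u v2 → f v1 = f v2 → v1 = v2)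
    {v w : V} (q : T.Walk v w) (hq : q.IsPath) : (q.map f).IsPath := by
  apply isPath_of_noBT ha
  intro i hi hEq
  rw [Walk.length_map] at hi
  rw [getVert_map, getVert_map] at hEq
  have h1 : T.Adj (q.getVert (i+1)) (q.getVert i) := (q.adj_getVert_succ (by omega)).symm
  have h2 : T.Adj (q.getVert (i+1)) (q.getVert (i+2)) := by
    have := q.adj_getVert_succ (i := i + 1) (by omega)
    exact this
  have := hloc _ _ _ h1 h2 hEq
  have hne := getVert_injOn_of_isPath hq i (by omega) (i+2) (by omega) this
  omega


structure Setup (V : Type*) (Ω : Type*) where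
  T : SimpleGraph V
  hT : T.IsTree
  c : V → V → Ω
  hbij : ∀ v : V, Set.BijOn (fun u => c v u) (T.neighborSet v) Set.univ
  F : Subgroup (Equiv.Perm Ω)
  h2trans : ∀ a b a' b' : Ω, a ≠ b → a' ≠ b' → ∃ f ∈ F, f a = a' ∧ f b = b'
  p : ℤ → V
  hinj : Function.Injective p
  hadj : ∀ i : ℤ, T.Adj (p i) (p (i + 1))

namespace Setup

variable {V Ω : Type*} (S : Setup V Ω)

/-! ### colours and permutations -/

lemma exists_nbr (x : V) (ω : Ω) : ∃ y, S.T.Adj x y ∧ S.c x y = ω := by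
  obtain ⟨y, hy, hcy⟩ := (S.hbij x).surjOn (Set.mem_univ ω)
  exact ⟨y, hy, hcy⟩

noncomputable def nbr (x : V) (ω : Ω) : V := (S.exists_nbr x ω).choose

lemma nbr_adj (x : V) (ω : Ω) : S.T.Adj x (S.nbr x ω) := (S.exists_nbr x ω).choose_spec.1

lemma nbr_col (x : V) (ω : Ω) : S.c x (S.nbr x ω) = ω := (S.exists_nbr x ω).choose_spec.2

lemma col_inj {x y1 y2 : V} (h1 : S.T.Adj x y1) (h2 : S.T.Adj x y2)
    (h : S.c x y1 = S.c x y2) : y1 = y2 :=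
  (S.hbij x).injOn h1 h2 h

lemma col_ne {x y1 y2 : V} (h1 : S.T.Adj x y1) (h2 : S.T.Adj x y2) (h : y1 ≠ y2) :
    S.c x y1 ≠ S.c x y2 := fun hc => h (S.col_inj h1 h2 hc)

lemma adj_down (i : ℤ) : S.T.Adj (S.p i) (S.p (i - 1)) := by
  have := (S.hadj (i - 1)).symm
  simpa using this

include S in
lemma exists_pair_ne : ∃ a b : Ω, a ≠ b := by
  refine ⟨S.c (S.p 1) (S.p 2), S.c (S.p 1) (S.p 0), ?_⟩
  apply S.col_ne (S.hadj 1) (by simpa using (S.hadj 0).symm)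
  intro h
  exact absurd (S.hinj h) (by norm_num)

lemma exists_perm1 (a a' : Ω) : ∃ f ∈ S.F, f a = a' := by
  obtain ⟨x, y, hxy⟩ := S.exists_pair_ne
  classical
  obtain ⟨f, hf, hfa, -⟩ := S.h2trans a (if a = x then y else x) a' (if a' = x then y else x)
    (by split <;> simp_all) (by split <;> simp_all)
  exact ⟨f, hf, hfa⟩

noncomputable def perm1 (a a' : Ω) : Equiv.Perm Ω := (S.exists_perm1 a a').choose

lemma perm1_mem (a a' : Ω) : S.perm1 a a' ∈ S.F := (S.exists_perm1 a a').choose_spec.1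

lemma perm1_spec (a a' : Ω) : S.perm1 a a' a = a' := (S.exists_perm1 a a').choose_spec.2

noncomputable def perm2 (a b a' b' : Ω) : Equiv.Perm Ω :=
  letI := Classical.dec (a ≠ b ∧ a' ≠ b')
  if h : a ≠ b ∧ a' ≠ b' then (S.h2trans a b a' b' h.1 h.2).choose else 1

lemma perm2_mem (a b a' b' : Ω) : S.perm2 a b a' b' ∈ S.F := by
  unfold perm2
  split
  · exact (S.h2trans a b a' b' (by assumption : a ≠ b ∧ a' ≠ b').1
      (by assumption : a ≠ b ∧ a' ≠ b').2).choose_spec.1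
  · exact one_mem _

lemma perm2_spec1 {a b a' b' : Ω} (h1 : a ≠ b) (h2 : a' ≠ b') : S.perm2 a b a' b' a = a' := by
  unfold perm2
  rw [dif_pos ⟨h1, h2⟩]
  exact (S.h2trans a b a' b' h1 h2).choose_spec.2.1

lemma perm2_spec2 {a b a' b' : Ω} (h1 : a ≠ b) (h2 : a' ≠ b') : S.perm2 a b a' b' b = b' := by
  unfold perm2
  rw [dif_pos ⟨h1, h2⟩]
  exact (S.h2trans a b a' b' h1 h2).choose_spec.2.2

noncomputable def fP (j : ℤ) : Equiv.Perm Ω :=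
  S.perm2 (S.c (S.p j) (S.p (j + 1))) (S.c (S.p j) (S.p (j - 1)))
          (S.c (S.p (j + 1)) (S.p (j + 2))) (S.c (S.p (j + 1)) (S.p j))

lemma fP_mem (j : ℤ) : S.fP j ∈ S.F := S.perm2_mem _ _ _ _

lemma col_up_ne_down (j : ℤ) : S.c (S.p j) (S.p (j + 1)) ≠ S.c (S.p j) (S.p (j - 1)) := by
  apply S.col_ne (S.hadj j) (S.adj_down j)
  intro h
  have := S.hinj h
  omega

lemma col_next_ne_prev (j : ℤ) : S.c (S.p (j + 1)) (S.p (j + 2)) ≠ S.c (S.p (j + 1)) (S.p j) := by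
  have h2 : S.T.Adj (S.p (j + 1)) (S.p (j + 2)) := by
    have := S.hadj (j + 1); convert this using 2; omega
  apply S.col_ne h2 (by simpa using (S.hadj j).symm)
  intro h
  have := S.hinj h
  omega

lemma fP_spec1 (j : ℤ) : S.fP j (S.c (S.p j) (S.p (j + 1))) = S.c (S.p (j + 1)) (S.p (j + 2)) :=
  S.perm2_spec1 (S.col_up_ne_down j) (S.col_next_ne_prev j)

lemma fP_spec2 (j : ℤ) : S.fP j (S.c (S.p j) (S.p (j - 1))) = S.c (S.p (j + 1)) (S.p j) :=
  S.perm2_spec2 (S.col_up_ne_down j) (S.col_next_ne_prev j)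



/-! ### the tree rooted at `p 0` -/

lemma hc : S.T.Connected := S.hT.isConnected
lemma ha : S.T.IsAcyclic := S.hT.IsAcyclic

noncomputable def r : V := S.p 0
noncomputable def Q (v : V) : S.T.Walk v S.r := pth S.hc v S.r
noncomputable def par (v : V) : V := (S.Q v).getVert 1
noncomputable def dep (v : V) : ℕ := (S.Q v).length

lemma Q_isPath (v : V) : (S.Q v).IsPath := pth_isPath _ _ _

lemma Q_self : S.Q S.r = Walk.nil := pth_self S.ha S.hc S.r

lemma par_r : S.par S.r = S.r := by
  unfold par
  rw [S.Q_self]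
  rfl

lemma dep_r : S.dep S.r = 0 := by
  unfold dep; rw [S.Q_self]; rfl

lemma dep_pos {v : V} (hv : v ≠ S.r) : 1 ≤ S.dep v := by
  by_contra h
  push_neg at h
  have h0 : (S.Q v).length = 0 := by unfold dep at h; omega
  exact hv (Walk.eq_of_length_eq_zero h0)

lemma par_adj {v : V} (hv : v ≠ S.r) : S.T.Adj v (S.par v) := by
  have h := (S.Q v).adj_getVert_succ (i := 0) (S.dep_pos hv)
  rwa [Walk.getVert_zero] at h

lemma dep_par {v : V} (hv : v ≠ S.r) : S.dep (S.par v) + 1 = S.dep v := by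
  cases hq : S.Q v with
  | nil => exact absurd rfl hv
  | @cons _ x _ h' q' =>
    have hx : S.par v = x := by
      unfold par; rw [hq, Walk.getVert_cons_succ, Walk.getVert_zero]
    have hq'path : q'.IsPath := by
      have := S.Q_isPath v; rw [hq] at this; exact this.of_cons
    have hQx : q' = S.Q x := eq_pth S.ha S.hc q' hq'path
    unfold dep
    rw [hq, Walk.length_cons, hx, ← hQx]

lemma dichotomy {u v : V} (h : S.T.Adj u v) : S.par u = v ∨ S.par v = u := by
  classical
  by_cases hu : u ∈ (S.Q v).support
  · right
    have ht : ((S.Q v).takeUntil u hu).IsPath := (S.Q_isPath v).takeUntil hu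
    have h1 : (Walk.cons h.symm Walk.nil : S.T.Walk v u).IsPath := by
      simp [Walk.cons_isPath_iff, h.ne']
    have heq : (S.Q v).takeUntil u hu = Walk.cons h.symm Walk.nil :=
      congrArg Subtype.val (S.ha.path_unique ⟨_, ht⟩ ⟨_, h1⟩)
    have hspec := (S.Q v).take_spec hu
    rw [heq] at hspec
    unfold par
    rw [← hspec]
    simp [Walk.getVert_append]
  · left
    have hcons : (Walk.cons h (S.Q v)).IsPath :=
      (Walk.cons_isPath_iff h (S.Q v)).mpr ⟨S.Q_isPath v, hu⟩
    have : Walk.cons h (S.Q v) = S.Q u := eq_pth S.ha S.hc _ hcons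
    unfold par
    rw [← this, Walk.getVert_cons_succ, Walk.getVert_zero]

lemma not_both_par {u v : V} (h : S.T.Adj u v) (h1 : S.par u = v) (h2 : S.par v = u) :
    False := by
  by_cases hu : u = S.r
  · subst hu
    rw [S.par_r] at h1
    exact h.ne h1
  · by_cases hv : v = S.r
    · subst hv
      rw [S.par_r] at h2
      exact h.ne' (h2.symm ▸ rfl)
    · have e1 := S.dep_par hu
      have e2 := S.dep_par hv
      rw [h1] at e1
      rw [h2] at e2
      omega

/-! ### walks along the bi-infinite path -/

noncomputable def walkUp (S : Setup V Ω) : (i : ℤ) → (n : ℕ) → S.T.Walk (S.p i) (S.p (i + n))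
  | i, 0 => Walk.nil.copy rfl (by norm_num)
  | i, (n+1) => (Walk.cons (S.hadj i) (S.walkUp (i+1) n)).copy rfl
      (congrArg S.p (by push_cast; ring))

noncomputable def walkDown (S : Setup V Ω) : (i : ℤ) → (n : ℕ) → S.T.Walk (S.p i) (S.p (i - n))
  | i, 0 => Walk.nil.copy rfl (by norm_num)
  | i, (n+1) => (Walk.cons (S.adj_down i) (S.walkDown (i-1) n)).copy rfl
      (congrArg S.p (by push_cast; ring))

lemma walkUp_length (i : ℤ) (n : ℕ) : (S.walkUp i n).length = n := by
  induction n generalizing i with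
  | zero => simp [walkUp]
  | succ n ih => simp [walkUp, ih]

lemma walkDown_length (i : ℤ) (n : ℕ) : (S.walkDown i n).length = n := by
  induction n generalizing i with
  | zero => simp [walkDown]
  | succ n ih => simp [walkDown, ih]

lemma walkUp_support {x : V} (i : ℤ) (n : ℕ) (hx : x ∈ (S.walkUp i n).support) :
    ∃ k : ℕ, k ≤ n ∧ x = S.p (i + k) := by
  induction n generalizing i with
  | zero =>
    simp [walkUp, Walk.support_copy, Walk.support_nil] at hx
    exact ⟨0, le_refl 0, by simpa using hx⟩
  | succ n ih =>
    simp only [walkUp, Walk.support_copy, Walk.support_cons, List.mem_cons] at hx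
    rcases hx with hx | hx
    · exact ⟨0, by omega, by simpa using hx⟩
    · obtain ⟨k, hk, hxk⟩ := ih (i+1) hx
      exact ⟨k + 1, by omega, by rw [hxk]; congr 1; push_cast; ring⟩

lemma walkDown_support {x : V} (i : ℤ) (n : ℕ) (hx : x ∈ (S.walkDown i n).support) :
    ∃ k : ℕ, k ≤ n ∧ x = S.p (i - k) := by
  induction n generalizing i with
  | zero =>
    simp [walkDown, Walk.support_copy, Walk.support_nil] at hx
    exact ⟨0, le_refl 0, by simpa using hx⟩
  | succ n ih =>
    simp only [walkDown, Walk.support_copy, Walk.support_cons, List.mem_cons] at hx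
    rcases hx with hx | hx
    · exact ⟨0, by omega, by simpa using hx⟩
    · obtain ⟨k, hk, hxk⟩ := ih (i-1) hx
      exact ⟨k + 1, by omega, by rw [hxk]; congr 1; push_cast; ring⟩

lemma walkUp_isPath (i : ℤ) (n : ℕ) : (S.walkUp i n).IsPath := by
  induction n generalizing i with
  | zero => simp [walkUp]
  | succ n ih =>
    simp only [walkUp, Walk.isPath_copy]
    rw [Walk.cons_isPath_iff]
    refine ⟨ih (i+1), fun hmem => ?_⟩
    obtain ⟨k, hk, hxk⟩ := S.walkUp_support (i+1) n hmem
    have := S.hinj hxk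
    omega

lemma walkDown_isPath (i : ℤ) (n : ℕ) : (S.walkDown i n).IsPath := by
  induction n generalizing i with
  | zero => simp [walkDown]
  | succ n ih =>
    simp only [walkDown, Walk.isPath_copy]
    rw [Walk.cons_isPath_iff]
    refine ⟨ih (i-1), fun hmem => ?_⟩
    obtain ⟨k, hk, hxk⟩ := S.walkDown_support (i-1) n hmem
    have := S.hinj hxk
    omega

lemma walkUp_getVert1 (i : ℤ) (n : ℕ) (hn : 1 ≤ n) : (S.walkUp i n).getVert 1 = S.p (i+1) := by
  obtain ⟨m, rfl⟩ : ∃ m, n = m + 1 := ⟨n - 1, by omega⟩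
  show ((Walk.cons (S.hadj i) (S.walkUp (i+1) m)).copy rfl _).getVert 1 = S.p (i+1)
  rw [Walk.getVert_copy, Walk.getVert_cons_succ, Walk.getVert_zero]

lemma walkDown_getVert1 (i : ℤ) (n : ℕ) (hn : 1 ≤ n) :
    (S.walkDown i n).getVert 1 = S.p (i-1) := by
  obtain ⟨m, rfl⟩ : ∃ m, n = m + 1 := ⟨n - 1, by omega⟩
  show ((Walk.cons (S.adj_down i) (S.walkDown (i-1) m)).copy rfl _).getVert 1 = S.p (i-1)
  rw [Walk.getVert_copy, Walk.getVert_cons_succ, Walk.getVert_zero]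

lemma adj_lt {i j : ℤ} (hlt : i < j) (h : S.T.Adj (S.p i) (S.p j)) : j = i + 1 := by
  have hn : (j - i).toNat = j - i := by omega
  have hw : S.T.Walk (S.p i) (S.p j) :=
    (S.walkUp i (j - i).toNat).copy rfl (congrArg S.p (by omega))
  have hwp : ((S.walkUp i (j - i).toNat).copy rfl (congrArg S.p (by omega)) :
      S.T.Walk (S.p i) (S.p j)).IsPath := by
    rw [Walk.isPath_copy]; exact S.walkUp_isPath _ _
  have h1 : (Walk.cons h Walk.nil : S.T.Walk (S.p i) (S.p j)).IsPath := by
    simp [Walk.cons_isPath_iff, h.ne]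
  have := congrArg Subtype.val (S.ha.path_unique ⟨_, hwp⟩ ⟨_, h1⟩)
  have hlen := congrArg Walk.length this
  simp [Walk.length_copy, S.walkUp_length] at hlen
  omega

lemma adj_consecutive {i j : ℤ} (h : S.T.Adj (S.p i) (S.p j)) : j = i + 1 ∨ j = i - 1 := by
  rcases lt_trichotomy i j with hlt | heq | hgt
  · exact Or.inl (S.adj_lt hlt h)
  · exact absurd (congrArg S.p heq) h.ne
  · have := S.adj_lt hgt h.symm
    omega

lemma Q_p_pos {i : ℤ} (hi : 0 < i) :
    S.Q (S.p i) = (S.walkDown i i.toNat).copy rfl (congrArg S.p (by omega)) := by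
  apply (eq_pth S.ha S.hc _ _).symm
  exact (Walk.isPath_copy _ _ _).mpr (S.walkDown_isPath _ _)

lemma Q_p_neg {i : ℤ} (hi : i < 0) :
    S.Q (S.p i) = (S.walkUp i (-i).toNat).copy rfl (congrArg S.p (by omega)) := by
  apply (eq_pth S.ha S.hc _ _).symm
  exact (Walk.isPath_copy _ _ _).mpr (S.walkUp_isPath _ _)

lemma par_p (i : ℤ) : ∃ k : ℤ, S.par (S.p i) = S.p k := by
  rcases lt_trichotomy 0 i with hi | hi | hi
  · refine ⟨i - 1, ?_⟩
    unfold par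
    rw [S.Q_p_pos hi]
    exact (Walk.getVert_copy _ _ _ _).trans (S.walkDown_getVert1 i i.toNat (by omega))
  · refine ⟨0, ?_⟩
    have : S.p i = S.r := by rw [← hi]; rfl
    rw [this, S.par_r]; rfl
  · refine ⟨i + 1, ?_⟩
    unfold par
    rw [S.Q_p_neg hi]
    exact (Walk.getVert_copy _ _ _ _).trans (S.walkUp_getVert1 i (-i).toNat (by omega))


/-! ### the automorphism -/

noncomputable def H (S : Setup V Ω) (v : V) : V :=
  letI := Classical.dec (∃ i, S.p i = v)
  letI := Classical.dec (∃ i, S.p i = S.par v)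
  if hv : ∃ i, S.p i = v then S.p (hv.choose + 1)
  else
    S.nbr (H S (S.par v))
      (if hu : ∃ i, S.p i = S.par v
       then S.fP hu.choose (S.c (S.par v) v)
       else S.perm1 (S.c (S.par v) (S.par (S.par v)))
         (S.c (H S (S.par v)) (H S (S.par (S.par v)))) (S.c (S.par v) v))
termination_by S.dep v
decreasing_by
  all_goals
    have hvr : v ≠ S.r := fun hh => hv ⟨0, ((show S.p 0 = S.r from rfl).trans hh.symm)⟩
    have e1 := S.dep_par hvr
    first
      | omega
      | · have hur : S.par v ≠ S.r := fun hh => hu ⟨0, ((show S.p 0 = S.r from rfl).trans hh.symm)⟩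
          have e2 := S.dep_par hur
          omega

noncomputable def g (v : V) : Equiv.Perm Ω :=
  letI := Classical.dec (∃ i, S.p i = v)
  if hu : ∃ i, S.p i = v then S.fP hu.choose
  else S.perm1 (S.c v (S.par v)) (S.c (H S v) (H S (S.par v)))

lemma g_mem (v : V) : S.g v ∈ S.F := by
  unfold g
  split
  · exact S.fP_mem _
  · exact S.perm1_mem _ _

lemma H_p (i : ℤ) : H S (S.p i) = S.p (i + 1) := by
  rw [H]
  have hv : ∃ j, S.p j = S.p i := ⟨i, rfl⟩
  rw [dif_pos hv]
  congr 1
  have := S.hinj hv.choose_spec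
  omega

lemma g_p (i : ℤ) : S.g (S.p i) = S.fP i := by
  unfold g
  have hv : ∃ j, S.p j = S.p i := ⟨i, rfl⟩
  rw [dif_pos hv]
  congr 1
  exact S.hinj hv.choose_spec

lemma H_notp {v : V} (hv : ¬ ∃ i, S.p i = v) :
    H S v = S.nbr (H S (S.par v)) (S.g (S.par v) (S.c (S.par v) v)) := by
  rw [H, dif_neg hv]
  unfold g
  by_cases hu : ∃ i, S.p i = S.par v
  · rw [dif_pos hu, dif_pos hu]
  · rw [dif_neg hu, dif_neg hu]

lemma main_parent {v : V} (hv : ¬ ∃ i, S.p i = v) :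
    S.T.Adj (H S (S.par v)) (H S v) ∧
      S.c (H S (S.par v)) (H S v) = S.g (S.par v) (S.c (S.par v) v) := by
  rw [S.H_notp hv]
  exact ⟨S.nbr_adj _ _, S.nbr_col _ _⟩

lemma main_up {u : V} (hu : ¬ ∃ i, S.p i = u) :
    S.c (H S u) (H S (S.par u)) = S.g u (S.c u (S.par u)) := by
  unfold g
  rw [dif_neg hu]
  exact (S.perm1_spec _ _).symm

lemma main {u v : V} (h : S.T.Adj u v) :
    S.T.Adj (H S u) (H S v) ∧ S.c (H S u) (H S v) = S.g u (S.c u v) := by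
  by_cases hu : ∃ i, S.p i = u
  · obtain ⟨i, rfl⟩ := hu
    by_cases hv : ∃ j, S.p j = v
    · obtain ⟨j, rfl⟩ := hv
      rcases S.adj_consecutive h with rfl | rfl
      · rw [S.H_p, S.H_p, S.g_p]
        constructor
        · rw [show i + 1 + 1 = i + 2 by ring]
          have := S.hadj (i + 1)
          rwa [show i + 1 + 1 = i + 2 by ring] at this
        · rw [show i + 1 + 1 = i + 2 by ring]
          exact (S.fP_spec1 i).symm
      · rw [S.H_p, S.H_p, S.g_p]
        constructor
        · rw [show i - 1 + 1 = i by ring]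
          have := S.adj_down (i + 1)
          rwa [show i + 1 - 1 = i by ring] at this
        · have := S.fP_spec2 i
          rw [show i - 1 + 1 = i by ring]
          exact this.symm
    · have hpv : S.par v = S.p i := by
        rcases S.dichotomy h with hpu | hpv
        · exfalso
          obtain ⟨k, hk⟩ := S.par_p i
          rw [hpu] at hk
          exact hv ⟨k, hk.symm⟩
        · exact hpv
      have hmp := S.main_parent hv
      rw [hpv] at hmp
      exact hmp
  · by_cases hv : ∃ j, S.p j = v
    · have hpu : S.par u = v := by
        rcases S.dichotomy h with hpu | hpv
        · exact hpu
        · exfalso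
          obtain ⟨j, rfl⟩ := hv
          obtain ⟨k, hk⟩ := S.par_p j
          rw [hpv] at hk
          exact hu ⟨k, hk.symm⟩
      refine ⟨?_, ?_⟩
      · rw [← hpu]
        exact (S.main_parent hu).1.symm
      · rw [← hpu]
        exact S.main_up hu
    · rcases S.dichotomy h with hpu | hpv
      · refine ⟨?_, ?_⟩
        · rw [← hpu]
          exact (S.main_parent hu).1.symm
        · rw [← hpu]
          exact S.main_up hu
      · have hmp := S.main_parent hv
        rw [hpv] at hmp
        exact hmp

noncomputable def hom : S.T →g S.T := ⟨H S, fun h => (S.main h).1⟩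

lemma hom_apply (v : V) : S.hom v = H S v := rfl

lemma H_locInj {u v1 v2 : V} (h1 : S.T.Adj u v1) (h2 : S.T.Adj u v2)
    (hEq : H S v1 = H S v2) : v1 = v2 := by
  have e1 := (S.main h1).2
  have e2 := (S.main h2).2
  have : S.g u (S.c u v1) = S.g u (S.c u v2) := by
    rw [← e1, ← e2, hEq]
  exact S.col_inj h1 h2 ((S.g u).injective this)

lemma map_pth_isPath (x y : V) : ((pth S.hc x y).map S.hom).IsPath := by
  apply map_isPath_of_locInj S.ha S.hom
    (fun u v1 v2 ha1 ha2 hEq => S.H_locInj ha1 ha2 hEq)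
    _ (pth_isPath _ _ _)

lemma H_inj : Function.Injective (H S) := by
  intro x y hxy
  by_contra hne
  set q := pth S.hc x y with hqdef
  have hq : q.IsPath := pth_isPath _ _ _
  have hlen : 1 ≤ q.length := by
    by_contra hl
    push_neg at hl
    have h0 : q.length = 0 := by omega
    exact hne (Walk.eq_of_length_eq_zero h0)
  have hmap : (q.map S.hom).IsPath := S.map_pth_isPath x y
  have hp2 : ((q.map S.hom).copy rfl hxy.symm).IsPath := by
    exact (Walk.isPath_copy _ _ _).mpr hmap
  have h0 := length_eq_zero_of_isPath S.ha _ hp2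
  have h0' : (q.map S.hom).length = 0 := (Walk.length_copy _ _ _).symm.trans h0
  rw [Walk.length_map] at h0'
  omega

lemma H_surj : Function.Surjective (H S) := by
  intro y
  suffices hh : ∀ n (y : V), (pth S.hc (S.p 1) y).length ≤ n → ∃ x, H S x = y from
    hh _ y le_rfl
  intro n
  induction n with
  | zero =>
    intro y hy
    have h0 : (pth S.hc (S.p 1) y).length = 0 := by omega
    have : S.p 1 = y := Walk.eq_of_length_eq_zero h0
    exact ⟨S.p 0, by rw [S.H_p]; norm_num; exact this⟩
  | succ n ih =>
    intro y hy
    by_cases hxy : S.p 1 = y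
    · exact ⟨S.p 0, by rw [S.H_p]; norm_num; exact hxy⟩
    · have hq : (pth S.hc (S.p 1) y).IsPath := pth_isPath _ _ _
      cases hrev : (pth S.hc (S.p 1) y).reverse with
      | nil => exact absurd rfl hxy
      | @cons _ z _ h' q'' =>
        have hq'' : q''.IsPath := by
          have hrp := hq.reverse
          rw [hrev] at hrp
          exact hrp.of_cons
        have hzq : q''.reverse = pth S.hc (S.p 1) z := by
          apply eq_pth S.ha S.hc
          exact hq''.reverse
        have hlen : (pth S.hc (S.p 1) z).length ≤ n := by
          have hl : (pth S.hc (S.p 1) y).reverse.length = (pth S.hc (S.p 1) y).length :=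
            Walk.length_reverse _
          rw [hrev, Walk.length_cons] at hl
          rw [← hzq, Walk.length_reverse]
          omega
        obtain ⟨x', hx'⟩ := ih z hlen
        have hzadj : S.T.Adj (H S x') y := by
          rw [hx']
          exact h'.symm
        set v := S.nbr x' ((S.g x')⁻¹ (S.c (H S x') y)) with hvdef
        have hv1 : S.T.Adj x' v := S.nbr_adj _ _
        have hv2 : S.c x' v = (S.g x')⁻¹ (S.c (H S x') y) := S.nbr_col _ _
        have hcc := (S.main hv1).2
        rw [hv2] at hcc
        rw [show ∀ z, S.g x' ((S.g x')⁻¹ z) = z from fun z => (S.g x').apply_symm_apply z] at hcc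
        exact ⟨v, S.col_inj (S.main hv1).1 hzadj hcc⟩

lemma adj_iff (u w : V) : S.T.Adj u w ↔ S.T.Adj (H S u) (H S w) := by
  constructor
  · exact fun h => (S.main h).1
  · intro h
    have hne : u ≠ w := by
      rintro rfl
      exact h.ne rfl
    set q := pth S.hc u w with hqdef
    have hq : q.IsPath := pth_isPath _ _ _
    have hmap : (q.map S.hom).IsPath := S.map_pth_isPath u w
    have h1 : (Walk.cons h Walk.nil : S.T.Walk (H S u) (H S w)).IsPath := by
      simp [Walk.cons_isPath_iff, h.ne]
    have huniq : q.map S.hom = Walk.cons h Walk.nil :=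
      congrArg Subtype.val (S.ha.path_unique ⟨_, hmap⟩ ⟨_, h1⟩)
    have hlen : q.length = 1 := by
      have := congrArg Walk.length huniq
      rw [Walk.length_map] at this
      exact this
    have hadj01 := q.adj_getVert_succ (i := 0) (by omega)
    rw [Walk.getVert_zero] at hadj01
    have hgv : q.getVert 1 = w := by
      have := q.getVert_length
      rwa [hlen] at this
    rwa [hgv] at hadj01

end Setup
end Stmt8Aux

/-- Suppose `F ≤ Sym(Ω)` is 2-transitive and `P` is a bi-infinite path in
the legally coloured regular tree `T`.  Then there exists `h ∈ U(F)` (an automorphism of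
`T` all of whose local actions lie in `F`) which is hyperbolic with translation length `1`
and whose axis is `P`, i.e. `h` translates `P` by one step. -/
theorem exists_translation_of_length_one {V Ω : Type*} (T : SimpleGraph V) (hT : T.IsTree)
    (c : V → V → Ω)
    (hsym : ∀ u v : V, T.Adj u v → c u v = c v u)
    (hbij : ∀ v : V, Set.BijOn (fun u => c v u) (T.neighborSet v) Set.univ)
    (σ : Equiv.Perm V → V → Equiv.Perm Ω)
    (hσ : ∀ g : Equiv.Perm V, (∀ u w : V, T.Adj u w ↔ T.Adj (g u) (g w)) →
      ∀ v u : V, T.Adj v u → σ g v (c v u) = c (g v) (g u))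
    (F : Subgroup (Equiv.Perm Ω))
    (h2trans : ∀ a b a' b' : Ω, a ≠ b → a' ≠ b' → ∃ f ∈ F, f a = a' ∧ f b = b')
    (p : ℤ → V) (hinj : Function.Injective p) (hadj : ∀ i : ℤ, T.Adj (p i) (p (i + 1))) :
    ∃ h : Equiv.Perm V, (∀ u w : V, T.Adj u w ↔ T.Adj (h u) (h w)) ∧
      (∀ v : V, σ h v ∈ F) ∧ ∀ i : ℤ, h (p i) = p (i + 1) := by
  classical
  let S : Stmt8Aux.Setup V Ω := ⟨T, hT, c, hbij, F, h2trans, p, hinj, hadj⟩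
  have hbijH : Function.Bijective (Stmt8Aux.Setup.H S) := ⟨S.H_inj, S.H_surj⟩
  refine ⟨Equiv.ofBijective _ hbijH, ?_, ?_, ?_⟩
  · intro u w
    exact S.adj_iff u w
  · intro v
    have hiff : ∀ u w : V, T.Adj u w ↔
        T.Adj ((Equiv.ofBijective _ hbijH) u) ((Equiv.ofBijective _ hbijH) w) :=
      fun u w => S.adj_iff u w
    have hgv : σ (Equiv.ofBijective _ hbijH) v = S.g v := by
      apply Equiv.ext
      intro ω
      have hadjv : T.Adj v (S.nbr v ω) := S.nbr_adj v ω
      have hcol : c v (S.nbr v ω) = ω := S.nbr_col v ω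
      calc σ (Equiv.ofBijective _ hbijH) v ω
          = σ (Equiv.ofBijective _ hbijH) v (c v (S.nbr v ω)) := by rw [hcol]
        _ = c ((Equiv.ofBijective _ hbijH) v) ((Equiv.ofBijective _ hbijH) (S.nbr v ω)) :=
            hσ _ hiff v _ hadjv
        _ = S.g v (c v (S.nbr v ω)) := (S.main hadjv).2
        _ = S.g v ω := by rw [hcol]
    rw [hgv]
    exact S.g_mem v
  · intro i
    exact S.H_p i
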